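/- Let P be a PARS over A, let ε > 0, and let f : A → ℝ≥0 be a ranking function for P with parameter ε. If μ ⇒_P ρ for multidistributions μ, ρ, then E(f(μ)) ≥ E(f(ρ)) + ε·|ρ|. -/
import Mathlib


open scoped NNReal ENNReal

/-- A finite (probability) distribution on `A`: a finitely supported weight
function with total weight `1`. -/
structure FinDist (A : Type*) where
  w : A →₀ ℝ≥0
  sum_one : w.sum (fun _ p => p) = 1

/-- Multidistributions on `A`: finite multisets of weighted elements `p:a`. -/
abbrev MD (A : Type*) := Multiset (ℝ≥0 × A)

namespace MD

/-- The total weight `|μ|` of a multidistribution. -/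
def wt {A : Type*} (μ : MD A) : ℝ≥0 := (μ.map Prod.fst).sum

/-- Scalar multiplication `p·μ`. -/
def smul {A : Type*} (p : ℝ≥0) (μ : MD A) : MD A :=
  μ.map fun qa => (p * qa.1, qa.2)

/-- The expected value `E(f(μ)) = Σ_{p:a ∈ μ} p·f(a)`. -/
def exp {A : Type*} (f : A → ℝ≥0) (μ : MD A) : ℝ≥0 :=
  (μ.map fun pa => pa.1 * f pa.2).sum

end MD

namespace FinDist

/-- The multidistribution associated with a finite distribution. -/
def toMD {A : Type*} (d : FinDist A) : MD A :=
  d.w.support.val.map fun a => (d.w a, a)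

/-- The expected value `E(f(d)) = Σ_a d(a)·f(a)`. -/
def exp {A : Type*} (f : A → ℝ≥0) (d : FinDist A) : ℝ≥0 :=
  d.w.sum fun a p => p * f a

/-- Pushforward of a finite distribution along a map; this is
`overline(h(d))`, the collapse of the elementwise image of `d`. -/
noncomputable def map {A B : Type*} (h : A → B) (d : FinDist A) : FinDist B :=
  ⟨Finsupp.mapDomain h d.w, by
    rw [Finsupp.sum_mapDomain_index (fun _ => rfl) (fun _ _ _ => rfl)]
    exact d.sum_one⟩

/-- The Dirac distribution. -/
noncomputable def dirac {A : Type*} (a : A) : FinDist A :=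
  ⟨Finsupp.single a 1, by simp⟩

end FinDist

/-- A PARS over `A`: a set of probabilistic reductions `a → d`. -/
abbrev PARS (A : Type*) := A → FinDist A → Prop

/-- `a` is terminal (a normal form) if it has no reduction. -/
def PARS.Terminal {A : Type*} (P : PARS A) (a : A) : Prop := ∀ d, ¬ P a d

/-- The probabilistic reduction relation `⇒_P` on multidistributions. -/
inductive PARS.Step {A : Type*} (P : PARS A) : MD A → MD A → Prop
  | term (a : A) : P.Terminal a → PARS.Step P {(1, a)} 0
  | rule (a : A) (d : FinDist A) : P a d → PARS.Step P {(1, a)} d.toMD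
  | conv (n : ℕ) (p : Fin n → ℝ≥0) (μ ρ : Fin n → MD A) :
      (∑ i, p i) ≤ 1 → (∀ i, PARS.Step P (μ i) (ρ i)) →
      PARS.Step P (∑ i, MD.smul (p i) (μ i)) (∑ i, MD.smul (p i) (ρ i))

/-- An (infinite) reduction sequence of `P`. -/
def PARS.RedSeq {A : Type*} (P : PARS A) (μs : ℕ → MD A) : Prop :=
  ∀ n, P.Step (μs n) (μs (n + 1))

/-- A reduction sequence of `P` starting from `μ`. -/
def PARS.RedSeqFrom {A : Type*} (P : PARS A) (μ : MD A) (μs : ℕ → MD A) : Prop :=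
  μs 0 = μ ∧ P.RedSeq μs

/-- The expected derivation length `adl(⃗μ) = Σ_{n ≥ 1} |μ_n|`. -/
noncomputable def adl {A : Type*} (μs : ℕ → MD A) : ℝ≥0∞ :=
  ∑' n : ℕ, (MD.wt (μs (n + 1)) : ℝ≥0∞)

/-- The expected derivation height `adh_P(a)`. -/
noncomputable def adh {A : Type*} (P : PARS A) (a : A) : ℝ≥0∞ :=
  ⨆ (μs : ℕ → MD A) (_ : P.RedSeqFrom {(1, a)} μs), adl μs

/-- Strong almost sure termination. -/
def PARS.SAST {A : Type*} (P : PARS A) : Prop := ∀ a, adh P a < ⊤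

/-- Almost sure termination. -/
def PARS.AST {A : Type*} (P : PARS A) : Prop :=
  ∀ μs : ℕ → MD A, P.RedSeq μs →
    Filter.Tendsto (fun n => MD.wt (μs n)) Filter.atTop (nhds 0)

/-- `f` is a (probabilistic) ranking function for `P` with parameter `ε`. -/
def PARS.Ranking {A : Type*} (P : PARS A) (ε : ℝ≥0) (f : A → ℝ≥0) : Prop :=
  ∀ a d, P a d → f a ≥ ε + FinDist.exp f d

section Aux
variable {A : Type*}

lemma MD.exp_zero (f : A → ℝ≥0) : MD.exp f (0 : MD A) = 0 := rfl

lemma MD.wt_zero : MD.wt (0 : MD A) = 0 := rfl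

lemma MD.exp_smul (f : A → ℝ≥0) (p : ℝ≥0) (μ : MD A) :
    MD.exp f (MD.smul p μ) = p * MD.exp f μ := by
  simp [MD.exp, MD.smul, Multiset.map_map, Function.comp, mul_assoc,
    ← Multiset.sum_map_mul_left]

lemma MD.wt_smul (p : ℝ≥0) (μ : MD A) :
    MD.wt (MD.smul p μ) = p * MD.wt μ := by
  simp [MD.wt, MD.smul, Multiset.map_map, Function.comp,
    ← Multiset.sum_map_mul_left]

lemma MD.exp_add (f : A → ℝ≥0) (μ ν : MD A) :
    MD.exp f (μ + ν) = MD.exp f μ + MD.exp f ν := by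
  simp [MD.exp]

lemma MD.wt_add (μ ν : MD A) : MD.wt (μ + ν) = MD.wt μ + MD.wt ν := by
  simp [MD.wt]

lemma MD.exp_sum (f : A → ℝ≥0) {n : ℕ} (μ : Fin n → MD A) :
    MD.exp f (∑ i, μ i) = ∑ i, MD.exp f (μ i) := by
  induction n with
  | zero => simp [MD.exp_zero]
  | succ n ih =>
    rw [Fin.sum_univ_succ, MD.exp_add, ih, Fin.sum_univ_succ]

lemma MD.wt_sum {n : ℕ} (μ : Fin n → MD A) :
    MD.wt (∑ i, μ i) = ∑ i, MD.wt (μ i) := by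
  induction n with
  | zero => simp [MD.wt_zero]
  | succ n ih =>
    rw [Fin.sum_univ_succ, MD.wt_add, ih, Fin.sum_univ_succ]

lemma FinDist.exp_toMD (f : A → ℝ≥0) (d : FinDist A) :
    MD.exp f d.toMD = FinDist.exp f d := by
  rw [MD.exp, FinDist.toMD, Multiset.map_map]
  rfl

lemma FinDist.wt_toMD (d : FinDist A) : MD.wt d.toMD = 1 := by
  rw [MD.wt, FinDist.toMD, Multiset.map_map]
  exact d.sum_one

end Aux

/-- a ranking function decreases in expectation by at least
`ε·|ρ|` along each probabilistic reduction step. -/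
theorem stmt_1 {A : Type*} [Countable A] (P : PARS A) (ε : ℝ≥0) (hε : 0 < ε)
    (f : A → ℝ≥0) (hf : P.Ranking ε f)
    (μ ρ : MD A) (h : P.Step μ ρ) :
    MD.exp f μ ≥ MD.exp f ρ + ε * MD.wt ρ := by
  induction h with
  | term a ha => simp [MD.exp, MD.wt]
  | rule a d hd =>
    have := hf a d hd
    simp only [FinDist.exp_toMD, FinDist.wt_toMD, mul_one]
    simpa [MD.exp, add_comm] using this
  | conv n p μ ρ hp hstep ih =>
    rw [MD.exp_sum, MD.exp_sum, MD.wt_sum]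
    simp only [MD.exp_smul, MD.wt_smul, Finset.mul_sum]
    rw [← Finset.sum_add_distrib]
    refine Finset.sum_le_sum fun i _ => ?_
    calc p i * MD.exp f (ρ i) + ε * (p i * MD.wt (ρ i))
        = p i * (MD.exp f (ρ i) + ε * MD.wt (ρ i)) := by ring
      _ ≤ p i * MD.exp f (μ i) := mul_le_mul_right (ih i) _
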